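/- Let m > 1, σ > 0, let ν be the Gaussian measure on ℝ with mean m and variance σ², and let S = [1, 2m−1]. Then the conditional first moment of the reciprocal admits the convergent series representation ∫_S (1/x) dν(x) = ∑_{j=0}^{∞} m^{−(2j+1)} ∫_S (x−m)^{2j} dν(x), where the series on the right converges; moreover all odd-index terms ∫_S (x−m)^{2j+1} dν(x) vanish by the symmetry of S about m. -/

import Mathlib

open MeasureTheory ProbabilityTheory Real Set
open scoped NNReal ENNReal

/-- Series representation for the conditional first moment of the reciprocal of a Gaussian
restricted to `S = [1, 2m−1]`, together with summability and vanishing of odd terms. -/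
theorem reciprocal_gaussian_first_moment_series (m σ : ℝ) (hm : 1 < m) (hσ : 0 < σ) :
    Summable (fun j : ℕ =>
        (1 / m ^ (2 * j + 1)) *
          ∫ x in Icc 1 (2 * m - 1), (x - m) ^ (2 * j)
            ∂(gaussianReal m ⟨σ ^ 2, sq_nonneg σ⟩)) ∧
    ((∫ x in Icc 1 (2 * m - 1), (1 / x) ∂(gaussianReal m ⟨σ ^ 2, sq_nonneg σ⟩)) =
      ∑' j : ℕ,
        (1 / m ^ (2 * j + 1)) *
          ∫ x in Icc 1 (2 * m - 1), (x - m) ^ (2 * j)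
            ∂(gaussianReal m ⟨σ ^ 2, sq_nonneg σ⟩)) ∧
    ∀ j : ℕ,
      (∫ x in Icc 1 (2 * m - 1), (x - m) ^ (2 * j + 1)
          ∂(gaussianReal m ⟨σ ^ 2, sq_nonneg σ⟩)) = 0 := by
  set ν : Measure ℝ := gaussianReal m ⟨σ ^ 2, sq_nonneg σ⟩ with hν
  set S : Set ℝ := Icc 1 (2 * m - 1) with hS
  have hm0 : (0 : ℝ) < m := by linarith
  have hmne : m ≠ 0 := ne_of_gt hm0
  haveI hprob : IsProbabilityMeasure ν := by
    rw [hν]; exact ProbabilityTheory.instIsProbabilityMeasureGaussianReal _ _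
  -- the reflection map preserves ν and S
  have hmap : ν.map (fun x => 2 * m - x) = ν := by
    have h1 : (fun x : ℝ => 2 * m - x) = (· + 2 * m) ∘ ((-1 : ℝ) * ·) := by
      ext x; simp; ring
    rw [hν, h1, ← Measure.map_map (by fun_prop) (by fun_prop),
      gaussianReal_map_const_mul (μ := m) (v := ⟨σ ^ 2, sq_nonneg σ⟩) (-1), gaussianReal_map_add_const]
    congr 1
    · ring
    · apply NNReal.eq; show (-1:ℝ)^2 * σ^2 = σ^2; norm_num
  have hpre : (fun x : ℝ => 2 * m - x) ⁻¹' S = S := by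
    ext x
    simp only [hS, mem_preimage, mem_Icc]
    constructor <;> intro h <;> exact ⟨by linarith [h.2], by linarith [h.1]⟩
  -- odd moments vanish
  have hodd : ∀ j : ℕ, (∫ x in S, (x - m) ^ (2 * j + 1) ∂ν) = 0 := by
    intro j
    have hcont : ∀ n : ℕ, AEStronglyMeasurable (fun x : ℝ => (x - m) ^ n) (ν.map (fun x => 2 * m - x)) :=
      fun n => (Continuous.aestronglyMeasurable (by fun_prop))
    have h1 : (∫ x in S, (x - m) ^ (2 * j + 1) ∂ν)
        = ∫ x in S, ((2 * m - x) - m) ^ (2 * j + 1) ∂ν := by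
      conv_lhs => rw [← hmap]
      rw [setIntegral_map (by exact measurableSet_Icc) (hcont _) (by fun_prop), hpre]
    have h2 : ∀ x : ℝ, ((2 * m - x) - m) ^ (2 * j + 1) = -((x - m) ^ (2 * j + 1)) := by
      intro x
      rw [show (2 * m - x) - m = -(x - m) by ring, Odd.neg_pow ⟨j, by ring⟩]
    simp only [h2, integral_neg] at h1
    linarith
  -- the series of functions
  set f : ℕ → ℝ → ℝ := fun k x => (m - x) ^ k / m ^ (k + 1) with hf
  set c : ℕ → ℝ := fun k => (m - 1) ^ k / m ^ (k + 1) with hc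
  have hr0 : (0 : ℝ) ≤ (m - 1) / m := div_nonneg (by linarith) (le_of_lt hm0)
  have hr1 : (m - 1) / m < 1 := by rw [div_lt_one hm0]; linarith
  have hceq : ∀ k, c k = ((m - 1) / m) ^ k * m⁻¹ := by
    intro k; rw [hc]; field_simp [pow_succ]; rw [div_pow]; field_simp; ring
  have hcsum : Summable c := by
    simp only [funext hceq]
    exact (summable_geometric_of_lt_one hr0 hr1).mul_right _
  have hcnonneg : ∀ k, 0 ≤ c k := fun k => by
    rw [hceq]; exact mul_nonneg (pow_nonneg hr0 _) (by positivity)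
  -- pointwise bound on S
  have hbound : ∀ k, ∀ x ∈ S, ‖f k x‖ ≤ c k := by
    intro k x hx
    rw [hS, mem_Icc] at hx
    have habs : |m - x| ≤ m - 1 := abs_le.mpr ⟨by linarith [hx.2], by linarith [hx.1]⟩
    have : ‖f k x‖ = |m - x| ^ k / m ^ (k + 1) := by
      rw [hf]; rw [norm_div, norm_pow, Real.norm_eq_abs, Real.norm_eq_abs,
        abs_of_pos (pow_pos hm0 _)]
    rw [this, hc]
    exact (div_le_div_iff_of_pos_right (pow_pos hm0 _)).mpr (pow_le_pow_left₀ (abs_nonneg _) habs k)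
  -- pointwise sum on S
  have hptsum : ∀ x ∈ S, (∑' k, f k x) = 1 / x := by
    intro x hx
    rw [hS, mem_Icc] at hx
    have hx0 : (0 : ℝ) < x := by linarith [hx.1]
    have hrx : ‖(m - x) / m‖ < 1 := by
      rw [Real.norm_eq_abs, abs_div, abs_of_pos hm0, div_lt_one hm0]
      have habs : |m - x| ≤ m - 1 := abs_le.mpr ⟨by linarith [hx.2], by linarith [hx.1]⟩
      linarith
    have hfk : ∀ k, f k x = ((m - x) / m) ^ k * m⁻¹ := by
      intro k; rw [hf]; field_simp [pow_succ]; rw [div_pow]; field_simp; ring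
    simp only [funext hfk]
    rw [tsum_mul_right, tsum_geometric_of_norm_lt_one hrx]
    have h1mx : 1 - (m - x) / m = x / m := by field_simp; ring
    rw [h1mx]
    field_simp
  -- measurability
  have hfm : ∀ k, AEStronglyMeasurable (f k) (ν.restrict S) :=
    fun k => Continuous.aestronglyMeasurable (by rw [hf]; fun_prop)
  have hμS : (ν.restrict S) univ ≤ 1 := by
    rw [Measure.restrict_apply_univ]; exact prob_le_one
  -- lintegral bound
  have hlb : ∀ k, (∫⁻ x, ‖f k x‖₊ ∂(ν.restrict S)) ≤ ENNReal.ofReal (c k) := by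
    intro k
    have hae : ∀ᵐ x ∂(ν.restrict S), (‖f k x‖₊ : ℝ≥0∞) ≤ ENNReal.ofReal (c k) := by
      filter_upwards [ae_restrict_mem (measurableSet_Icc : MeasurableSet S)] with x hx
      rw [← enorm_eq_nnnorm, ← ofReal_norm_eq_enorm]
      exact ENNReal.ofReal_le_ofReal (hbound k x hx)
    calc (∫⁻ x, ‖f k x‖₊ ∂(ν.restrict S)) ≤ ∫⁻ _, ENNReal.ofReal (c k) ∂(ν.restrict S) :=
          lintegral_mono_ae hae
      _ = ENNReal.ofReal (c k) * (ν.restrict S) univ := lintegral_const _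
      _ ≤ ENNReal.ofReal (c k) * 1 := by gcongr
      _ = ENNReal.ofReal (c k) := mul_one _
  have hlsum : (∑' k, ∫⁻ x, ‖f k x‖₊ ∂(ν.restrict S)) ≠ ⊤ := by
    refine ne_top_of_le_ne_top ?_ (ENNReal.tsum_le_tsum hlb)
    rw [← ENNReal.ofReal_tsum_of_nonneg hcnonneg hcsum]
    exact ENNReal.ofReal_ne_top
  -- swap integral and sum
  have hswap : (∫ x in S, (1 / x) ∂ν) = ∑' k, ∫ x in S, f k x ∂ν := by
    rw [← integral_tsum hfm hlsum]
    refine integral_congr_ae ?_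
    filter_upwards [ae_restrict_mem (measurableSet_Icc : MeasurableSet S)] with x hx
    exact (hptsum x hx).symm
  set t : ℕ → ℝ := fun k => ∫ x in S, f k x ∂ν with ht
  have htb : ∀ k, ‖t k‖ ≤ c k := by
    intro k
    have hSfin : ν S < ⊤ := lt_of_le_of_lt prob_le_one (by norm_num)
    calc ‖t k‖ ≤ c k * (ν S).toReal :=
          norm_setIntegral_le_of_norm_le_const hSfin (fun x hx => hbound k x hx)
      _ ≤ c k * 1 := by
          refine mul_le_mul_of_nonneg_left ?_ (hcnonneg k)
          exact ENNReal.toReal_le_of_le_ofReal (by norm_num) (by simpa using prob_le_one (μ := ν) (s := S))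
      _ = c k := mul_one _
  have htsum : Summable t := Summable.of_norm_bounded hcsum htb
  -- even terms
  have hteq : ∀ j : ℕ, t (2 * j) = (1 / m ^ (2 * j + 1)) * ∫ x in S, (x - m) ^ (2 * j) ∂ν := by
    intro j
    have h2 : ∀ x : ℝ, f (2 * j) x = (x - m) ^ (2 * j) * (1 / m ^ (2 * j + 1)) := by
      intro x
      rw [hf]
      simp only
      rw [show m - x = -(x - m) by ring, Even.neg_pow ⟨j, by ring⟩]
      ring
    rw [ht]
    simp only [h2]
    rw [integral_mul_const]
    ring
  -- odd terms of t vanish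
  have htodd : ∀ j : ℕ, t (2 * j + 1) = 0 := by
    intro j
    have h2 : ∀ x : ℝ, f (2 * j + 1) x = (x - m) ^ (2 * j + 1) * (-(1 / m ^ (2 * j + 2))) := by
      intro x
      rw [hf]
      simp only
      rw [show m - x = -(x - m) by ring, Odd.neg_pow ⟨j, by ring⟩]
      ring
    rw [ht]
    simp only [h2]
    rw [integral_mul_const, hodd j, zero_mul]
  have hinj : Function.Injective (fun j : ℕ => 2 * j) := mul_right_injective₀ two_ne_zero
  have heven : Summable (fun j : ℕ => t (2 * j)) := htsum.comp_injective hinj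
  have hoddS : Summable (fun j : ℕ => t (2 * j + 1)) := by
    simp only [funext htodd]; exact summable_zero
  refine ⟨?_, ?_, hodd⟩
  · have := heven
    rwa [show (fun j : ℕ => t (2 * j)) = (fun j : ℕ =>
        (1 / m ^ (2 * j + 1)) * ∫ x in S, (x - m) ^ (2 * j) ∂ν) from funext hteq] at this
  · rw [hswap, ← tsum_even_add_odd heven hoddS]
    simp only [funext htodd, tsum_zero, add_zero]
    exact tsum_congr fun j => hteq j
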